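/- Let X be a proper metric space and g a bounded continuous Higson function on X. Then g can be written as g = f + h where f is a Lipschitz–Higson function and h ∈ C₀(X) (h vanishes at infinity). -/

import Mathlib

/-- `g` is a Higson function: its oscillation over bounded distances vanishes at
infinity. -/
def IsHigson {X : Type*} [MetricSpace X] (g : X → ℝ) : Prop :=
  ∀ R > (0 : ℝ), ∀ ε > (0 : ℝ), ∃ A : Set X, IsCompact A ∧
    ∀ x y : X, x ∉ A → y ∉ A → dist x y < R → |g x - g y| < ε

/-- `f` is a Lipschitz–Higson function: for every `L > 0` there is a compact set
off which `f` is `L`-Lipschitz. -/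
def IsLipHigson {X : Type*} [MetricSpace X] (f : X → ℝ) : Prop :=
  ∀ L > (0 : ℝ), ∃ A : Set X, IsCompact A ∧
    ∀ x y : X, x ∉ A → y ∉ A → |f x - f y| ≤ L * dist x y

namespace HigsonAux

noncomputable def hh (w r : ℕ → ℝ) (n : ℕ) (t : ℝ) : ℝ :=
  (n + 1 : ℝ) + max 0 ((t - r n) / w n)

noncomputable def th (w r : ℕ → ℝ) (t : ℝ) : ℝ := ⨅ n : ℕ, hh w r n t

lemma hh_ge (w r : ℕ → ℝ) (n : ℕ) (t : ℝ) : (n + 1 : ℝ) ≤ hh w r n t :=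
  le_add_of_nonneg_right (le_max_left _ _)

lemma hh_ge_one (w r : ℕ → ℝ) (n : ℕ) (t : ℝ) : (1 : ℝ) ≤ hh w r n t := by
  have h1 := hh_ge w r n t
  have h2 : (0:ℝ) ≤ (n:ℝ) := Nat.cast_nonneg n
  linarith

lemma hh_bdd (w r : ℕ → ℝ) (t : ℝ) : BddBelow (Set.range fun n => hh w r n t) := by
  refine ⟨1, ?_⟩
  rintro a ⟨n, rfl⟩
  exact hh_ge_one w r n t

lemma th_le_hh (w r : ℕ → ℝ) (n : ℕ) (t : ℝ) : th w r t ≤ hh w r n t :=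
  ciInf_le (hh_bdd w r t) n

lemma hh_mono (w r : ℕ → ℝ) (hw1 : ∀ n, (1:ℝ) ≤ w n) (n : ℕ) {s t : ℝ} (h : s ≤ t) :
    hh w r n s ≤ hh w r n t := by
  have hwn : (0:ℝ) < w n := lt_of_lt_of_le one_pos (hw1 n)
  unfold hh
  gcongr

lemma hh_lip (w r : ℕ → ℝ) (hw1 : ∀ n, (1:ℝ) ≤ w n) (n : ℕ) {s t : ℝ} (h : s ≤ t) :
    hh w r n t ≤ hh w r n s + (t - s) / w n := by
  have hwn : (0:ℝ) < w n := lt_of_lt_of_le one_pos (hw1 n)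
  have hts : (0:ℝ) ≤ (t - s) / w n := by
    apply div_nonneg (by linarith) hwn.le
  have h1 : (t - r n) / w n = (s - r n) / w n + (t - s) / w n := by
    rw [← add_div]; ring_nf
  have h2 : max 0 ((t - r n) / w n) ≤ max 0 ((s - r n) / w n) + (t - s) / w n := by
    apply max_le
    · have := le_max_left (0:ℝ) ((s - r n) / w n); linarith
    · rw [h1]
      have := le_max_right (0:ℝ) ((s - r n) / w n); linarith
  unfold hh; linarith

lemma r_gap (w r : ℕ → ℝ) (hwm : ∀ m n, m ≤ n → w m ≤ w n)
    (hr : ∀ n, r (n+1) = r n + w n) (m : ℕ) :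
    ∀ k : ℕ, (k : ℝ) * w m ≤ r (m + k) - r m := by
  intro k
  induction k with
  | zero => simp
  | succ k ih =>
    have h1 : r (m + k + 1) = r (m + k) + w (m + k) := hr (m + k)
    have h2 : w m ≤ w (m + k) := hwm m (m + k) (Nat.le_add_right _ _)
    have h3 : m + (k + 1) = m + k + 1 := by omega
    rw [h3]
    push_cast
    push_cast at ih
    linarith

lemma hh_tail (w r : ℕ → ℝ) (hw1 : ∀ n, (1:ℝ) ≤ w n) (hwm : ∀ m n, m ≤ n → w m ≤ w n)
    (hr : ∀ n, r (n+1) = r n + w n) {N n : ℕ} (hn : n < N) {t : ℝ} (ht : r N ≤ t) :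
    hh w r N t ≤ hh w r n t := by
  have hwn : (0:ℝ) < w n := lt_of_lt_of_le one_pos (hw1 n)
  have hwN : (0:ℝ) < w N := lt_of_lt_of_le one_pos (hw1 N)
  have hwmn : w n ≤ w N := hwm n N hn.le
  have hgap : ((N - n : ℕ) : ℝ) * w n ≤ r N - r n := by
    have h := r_gap w r hwm hr n (N - n)
    have h2 : n + (N - n) = N := by omega
    rwa [h2] at h
  have hcast : ((N - n : ℕ) : ℝ) = (N : ℝ) - n := by
    rw [Nat.cast_sub hn.le]
  rw [hcast] at hgap
  have htN : (0:ℝ) ≤ t - r N := by linarith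
  have a1 : (t - r N) / w N ≤ (t - r N) / w n := by gcongr
  have a2 : ((N:ℝ) - n) ≤ (r N - r n) / w n := by
    rw [le_div_iff₀ hwn]; linarith
  have a3 : (t - r N) / w n + (r N - r n) / w n = (t - r n) / w n := by
    rw [← add_div]; ring_nf
  have k1 : (t - r N) / w N + ((N:ℝ) - n) ≤ (t - r n) / w n := by linarith
  have k3 : (t - r N) / w N + ((N:ℝ) - n) ≤ max 0 ((t - r n) / w n) :=
    le_trans k1 (le_max_right _ _)
  have k2 : hh w r N t = (N + 1 : ℝ) + (t - r N) / w N := by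
    unfold hh
    rw [max_eq_right (by positivity)]
  rw [k2]
  unfold hh
  have hnN : (n:ℝ) < N := by exact_mod_cast hn
  linarith

lemma th_ge (w r : ℕ → ℝ) (hw1 : ∀ n, (1:ℝ) ≤ w n) (hwm : ∀ m n, m ≤ n → w m ≤ w n)
    (hr : ∀ n, r (n+1) = r n + w n) (N : ℕ) {t : ℝ} (ht : r N ≤ t) :
    (N + 1 : ℝ) ≤ th w r t := by
  apply le_ciInf
  intro n
  rcases lt_or_ge n N with h | h
  · exact le_trans (hh_ge w r N t) (hh_tail w r hw1 hwm hr h ht)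
  · have : (N:ℝ) ≤ n := by exact_mod_cast h
    have := hh_ge w r n t
    linarith

lemma th_le (w r : ℕ → ℝ) (hw1 : ∀ n, (1:ℝ) ≤ w n)
    (hr : ∀ n, r (n+1) = r n + w n) (n : ℕ) {t : ℝ} (ht : t ≤ r (n+1)) :
    th w r t ≤ (n + 2 : ℝ) := by
  have hwn : (0:ℝ) < w n := lt_of_lt_of_le one_pos (hw1 n)
  have h1 := th_le_hh w r n t
  have h2 : (t - r n) / w n ≤ 1 := by
    rw [div_le_one hwn]
    have := hr n; linarith
  have h3 : max 0 ((t - r n) / w n) ≤ 1 := max_le zero_le_one h2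
  unfold hh at h1
  linarith

lemma th_mono (w r : ℕ → ℝ) (hw1 : ∀ n, (1:ℝ) ≤ w n) {s t : ℝ} (h : s ≤ t) :
    th w r s ≤ th w r t :=
  le_ciInf fun n => le_trans (th_le_hh w r n s) (hh_mono w r hw1 n h)

lemma th_lip_above (w r : ℕ → ℝ) (hw1 : ∀ n, (1:ℝ) ≤ w n)
    (hwm : ∀ m n, m ≤ n → w m ≤ w n) (hr : ∀ n, r (n+1) = r n + w n)
    (N : ℕ) {s t : ℝ} (hs : r N ≤ s) (hst : s ≤ t) :
    th w r t ≤ th w r s + (t - s) / w N := by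
  have hwN : (0:ℝ) < w N := lt_of_lt_of_le one_pos (hw1 N)
  apply le_of_forall_pos_le_add
  intro ε hε
  obtain ⟨n, hn⟩ := exists_lt_of_ciInf_lt (show th w r s < th w r s + ε by linarith)
  have key : ∃ n', N ≤ n' ∧ hh w r n' s < th w r s + ε := by
    rcases le_or_gt N n with h | h
    · exact ⟨n, h, hn⟩
    · exact ⟨N, le_rfl, lt_of_le_of_lt (hh_tail w r hw1 hwm hr h hs) hn⟩
  obtain ⟨n', hNn', hn'⟩ := key
  have l1 : th w r t ≤ hh w r n' t := th_le_hh w r n' t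
  have l2 : hh w r n' t ≤ hh w r n' s + (t - s) / w n' := hh_lip w r hw1 n' hst
  have l3 : (t - s) / w n' ≤ (t - s) / w N := by
    have : w N ≤ w n' := hwm N n' hNn'
    gcongr
  linarith

lemma th_lip (w r : ℕ → ℝ) (hw1 : ∀ n, (1:ℝ) ≤ w n)
    (hwm : ∀ m n, m ≤ n → w m ≤ w n) (hr : ∀ n, r (n+1) = r n + w n)
    (N : ℕ) {s t : ℝ} (hs : r N ≤ s) (ht : r N ≤ t) :
    |th w r t - th w r s| ≤ |t - s| / w N := by
  rcases le_total s t with h | h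
  · rw [abs_of_nonneg (sub_nonneg.mpr (th_mono w r hw1 h)), abs_of_nonneg (sub_nonneg.mpr h)]
    have := th_lip_above w r hw1 hwm hr N hs h
    linarith
  · rw [abs_of_nonpos (sub_nonpos.mpr (th_mono w r hw1 h)), abs_of_nonpos (sub_nonpos.mpr h)]
    have h1 := th_lip_above w r hw1 hwm hr N ht h
    have h2 : (s - t) / w N = -(t - s) / w N := by ring
    have h3 : -(t - s) / w N = -((t - s) / w N) := neg_div _ _
    linarith

section ic

variable {X : Type*} [MetricSpace X] [Nonempty X]

noncomputable def ic (g c : X → ℝ) (x : X) : ℝ := ⨅ y, (g y + c x * dist x y)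

lemma ic_bdd (g c : X → ℝ) (M : ℝ) (hgM : ∀ z, |g z| ≤ M) (hc : ∀ z, 0 ≤ c z) (x : X) :
    BddBelow (Set.range fun y => g y + c x * dist x y) := by
  refine ⟨-M, ?_⟩
  rintro a ⟨y, rfl⟩
  show -M ≤ g y + c x * dist x y
  have h1 := (abs_le.mp (hgM y)).1
  have h2 : 0 ≤ c x * dist x y := mul_nonneg (hc x) dist_nonneg
  linarith

lemma ic_le (g c : X → ℝ) (M : ℝ) (hgM : ∀ z, |g z| ≤ M) (hc : ∀ z, 0 ≤ c z) (x : X) :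
    ic g c x ≤ g x := by
  have := ciInf_le (ic_bdd g c M hgM hc x) x
  simpa [ic, dist_self] using this

lemma ic_ge (g c : X → ℝ) (M : ℝ) (hgM : ∀ z, |g z| ≤ M) (hc : ∀ z, 0 ≤ c z) (x : X) :
    -M ≤ ic g c x := by
  apply le_ciInf
  intro y
  show -M ≤ g y + c x * dist x y
  have h1 := (abs_le.mp (hgM y)).1
  have h2 : 0 ≤ c x * dist x y := mul_nonneg (hc x) dist_nonneg
  linarith

lemma ic_sub_le (g c : X → ℝ) (M : ℝ) (hM : 1 ≤ M) (hgM : ∀ z, |g z| ≤ M)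
    (hc : ∀ z, 0 < c z) {x x' : X} {W q : ℝ} (hW : 0 < W) (hq : c x ≤ q)
    (hratio : |c x - c x'| ≤ 2 * (dist x x' / W) * c x') :
    ic g c x - ic g c x' ≤ (q + 6 * M / W) * dist x x' := by
  have hd0 : (0:ℝ) ≤ dist x x' := dist_nonneg
  apply le_of_forall_pos_le_add
  intro ε hε
  set δ := min ε 1 with hδdef
  have hδ : 0 < δ := lt_min hε one_pos
  have hδ1 : δ ≤ 1 := min_le_right _ _
  have hδε : δ ≤ ε := min_le_left _ _
  obtain ⟨y, hy⟩ := exists_lt_of_ciInf_lt (show ic g c x' < ic g c x' + δ by linarith)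
  -- hy : g y + c x' * dist x' y < ic g c x' + δ
  have hicx' : ic g c x' ≤ g x' := ic_le g c M hgM (fun z => (hc z).le) x'
  have hgx' := (abs_le.mp (hgM x')).2
  have hgy := (abs_le.mp (hgM y)).1
  have h2 : c x' * dist x' y ≤ 2 * M + δ := by linarith
  have hdy : dist x' y ≤ (2 * M + δ) / c x' := by
    rw [le_div_iff₀ (hc x')]
    calc dist x' y * c x' = c x' * dist x' y := by ring
      _ ≤ 2 * M + δ := h2
  have e1 : ic g c x ≤ g y + c x * dist x y :=
    ciInf_le (ic_bdd g c M hgM (fun z => (hc z).le) x) y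
  have e2 : dist x y ≤ dist x' y + dist x x' := by
    have := dist_triangle x x' y
    linarith [dist_comm x x']
  have e3 : c x * dist x y ≤ c x * dist x' y + c x * dist x x' := by
    nlinarith [(hc x).le]
  have e4 : c x * dist x' y ≤ c x' * dist x' y + |c x - c x'| * dist x' y := by
    nlinarith [le_abs_self (c x - c x'), dist_nonneg (x := x') (y := y)]
  have e5 : |c x - c x'| * dist x' y ≤ (2 * (dist x x' / W) * c x') * ((2 * M + δ) / c x') := by
    apply mul_le_mul hratio hdy dist_nonneg
    exact mul_nonneg (mul_nonneg (by norm_num) (div_nonneg dist_nonneg hW.le)) (hc x').le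
  have e5' : (2 * (dist x x' / W) * c x') * ((2 * M + δ) / c x')
      = 2 * (dist x x' / W) * (2 * M + δ) := by
    have hne : (c x') ≠ 0 := (hc x').ne'
    field_simp
  have e6 : 2 * (dist x x' / W) * (2 * M + δ) ≤ 6 * M / W * dist x x' := by
    have hdW : 0 ≤ dist x x' / W := by positivity
    have h4 : 2 * (2 * M + δ) ≤ 6 * M := by linarith
    calc 2 * (dist x x' / W) * (2 * M + δ) = (dist x x' / W) * (2 * (2 * M + δ)) := by ring
      _ ≤ (dist x x' / W) * (6 * M) := by nlinarith
      _ = 6 * M / W * dist x x' := by ring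
  have e7 : c x * dist x x' ≤ q * dist x x' := mul_le_mul_of_nonneg_right hq hd0
  have expand : (q + 6 * M / W) * dist x x' = q * dist x x' + 6 * M / W * dist x x' := by ring
  linarith

end ic

end HigsonAux

set_option maxHeartbeats 2000000 in
theorem higson_eq_lipHigson_add_C0 {X : Type*} [MetricSpace X] [ProperSpace X]
    (g : X → ℝ) (hgc : Continuous g) (hgb : ∃ M : ℝ, ∀ x, |g x| ≤ M)
    (hg : IsHigson g) :
    ∃ f h : X → ℝ, Continuous f ∧ (∃ M : ℝ, ∀ x, |f x| ≤ M) ∧ IsLipHigson f ∧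
      Continuous h ∧ Filter.Tendsto h (Filter.cocompact X) (nhds 0) ∧
      g = f + h := by
  classical
  rcases isEmpty_or_nonempty X with hX | hX
  · refine ⟨g, fun _ => 0, hgc, hgb, ?_, continuous_const, tendsto_const_nhds, ?_⟩
    · intro L hL
      exact ⟨∅, isCompact_empty, fun x => isEmptyElim x⟩
    · funext x
      simp
  obtain ⟨x₀⟩ := hX
  haveI hXne : Nonempty X := ⟨x₀⟩
  obtain ⟨M₀, hM₀⟩ := hgb
  set M : ℝ := max M₀ 1 with hMdef
  have hM1 : (1:ℝ) ≤ M := le_max_right _ _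
  have hMpos : (0:ℝ) < M := lt_of_lt_of_le one_pos hM1
  have hgM : ∀ x, |g x| ≤ M := fun x => (hM₀ x).trans (le_max_left _ _)
  have hgub : ∀ x, g x ≤ M := fun x => (abs_le.mp (hgM x)).2
  have hglb : ∀ x, -M ≤ g x := fun x => (abs_le.mp (hgM x)).1
  set K : ℕ → ℝ := fun n => 2 * M * Real.exp ((n:ℝ) + 2) with hKdef
  have hKpos : ∀ n, 0 < K n := by
    intro n
    have := Real.exp_pos ((n:ℝ) + 2)
    positivity
  have H : ∀ n : ℕ, ∃ A : Set X, IsCompact A ∧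
      ∀ x y : X, x ∉ A → y ∉ A → dist x y < K n → |g x - g y| < 1/((n:ℝ)+1) := by
    intro n
    exact hg (K n) (hKpos n) (1/((n:ℝ)+1)) (by positivity)
  choose A hAcomp hAosc using H
  have Hρ : ∀ n, ∃ ρ : ℝ, 0 ≤ ρ ∧ A n ⊆ Metric.closedBall x₀ ρ := by
    intro n
    obtain ⟨ρ, hρ⟩ := (hAcomp n).isBounded.subset_closedBall x₀
    exact ⟨max ρ 0, le_max_right _ _,
      hρ.trans (Metric.closedBall_subset_closedBall (le_max_left _ _))⟩
  choose ρ hρ0 hρsub using Hρ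
  set u : ℕ → ℝ := fun n => max ((n:ℝ) + 1) (ρ (n+1) + K (n+1) + 1) with hudef
  have hu1 : ∀ n, (1:ℝ) ≤ u n := by
    intro n
    have h2 : (0:ℝ) ≤ (n:ℝ) := Nat.cast_nonneg n
    have : (1:ℝ) ≤ (n:ℝ) + 1 := by linarith
    exact this.trans (le_max_left _ _)
  have hu0 : ∀ n, (0:ℝ) ≤ u n := fun n => le_trans zero_le_one (hu1 n)
  set w : ℕ → ℝ := fun n => ∑ k ∈ Finset.range (n+1), u k with hwdef
  have hwge : ∀ n, u n ≤ w n := by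
    intro n
    apply Finset.single_le_sum (f := u) (fun i _ => hu0 i)
    simp
  have hw1 : ∀ n, (1:ℝ) ≤ w n := fun n => (hu1 n).trans (hwge n)
  have hwm : ∀ m n, m ≤ n → w m ≤ w n := by
    intro m n hmn
    apply Finset.sum_le_sum_of_subset_of_nonneg
    · exact Finset.range_subset_range.mpr (by omega)
    · intro i _ _; exact hu0 i
  have hwge' : ∀ n : ℕ, (n:ℝ) + 1 ≤ w n := by
    intro n
    exact le_trans (le_max_left _ _) (hwge n)
  set r : ℕ → ℝ := fun n => ∑ k ∈ Finset.range n, w k with hrdef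
  have hr : ∀ n, r (n+1) = r n + w n := by
    intro n
    simp [hrdef, Finset.sum_range_succ]
  have hr0 : r 0 = 0 := by simp [hrdef]
  have hrnn : ∀ n, 0 ≤ r n := by
    intro n
    apply Finset.sum_nonneg
    intro i _
    exact le_trans zero_le_one (hw1 i)
  have hrmono : ∀ m n, m ≤ n → r m ≤ r n := by
    intro m n hmn
    apply Finset.sum_le_sum_of_subset_of_nonneg
    · exact Finset.range_subset_range.mpr hmn
    · intro i _ _; exact le_trans zero_le_one (hw1 i)
  have hrge : ∀ n : ℕ, (n:ℝ) ≤ r n := by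
    intro n
    have h := Finset.card_nsmul_le_sum (Finset.range n) w 1 (fun i _ => hw1 i)
    simpa [nsmul_eq_mul] using h
  have hrdiag : ∀ m, ρ (m+1) + K (m+1) + 1 ≤ r (m+1) := by
    intro m
    have h1 : ρ (m+1) + K (m+1) + 1 ≤ u m := le_max_right _ _
    have h2 : u m ≤ w m := hwge m
    have h3 := hr m
    have h4 := hrnn m
    linarith
  -- annulus decomposition
  have annP : ∀ (P N : ℕ) (t : ℝ), N ≤ P → r N ≤ t → t ≤ r P →
      ∃ n, N ≤ n ∧ r n ≤ t ∧ t ≤ r (n+1) := by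
    intro P
    induction P with
    | zero =>
      intro N t hNP hNt htP
      have hN0 : N = 0 := by omega
      subst hN0
      exact ⟨0, le_rfl, hNt, htP.trans (hrmono 0 1 (by omega))⟩
    | succ P ih =>
      intro N t hNP hNt htP
      by_cases hc : t ≤ r P
      · by_cases hNP' : N ≤ P
        · exact ih N t hNP' hNt hc
        · have hNeq : N = P + 1 := by omega
          exact ⟨N, le_rfl, hNt, hc.trans (hrmono P (N+1) (by omega))⟩
      · push_neg at hc
        by_cases hNP' : N ≤ P
        · exact ⟨P, hNP', hc.le, htP⟩
        · have hNeq : N = P + 1 := by omega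
          subst hNeq
          exact ⟨P+1, le_rfl, hNt, htP.trans (hrmono (P+1) (P+1+1) (by omega))⟩
  have ann : ∀ (N : ℕ) (t : ℝ), r N ≤ t → ∃ n, N ≤ n ∧ r n ≤ t ∧ t ≤ r (n+1) := by
    intro N t hNt
    set P := max N ⌈t⌉₊ with hPdef
    apply annP P N t (le_max_left _ _) hNt
    calc t ≤ (⌈t⌉₊ : ℝ) := Nat.le_ceil t
      _ ≤ (P : ℝ) := by exact_mod_cast Nat.cast_le.mpr (le_max_right _ _)
      _ ≤ r P := hrge P
  -- the slope function and the infimal convolution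
  set c : X → ℝ := fun x => Real.exp (-(HigsonAux.th w r (dist x₀ x))) with hcdef
  have hcpos : ∀ x, 0 < c x := fun x => Real.exp_pos _
  set f : X → ℝ := HigsonAux.ic g c with hfdef
  have hf_le : ∀ x, f x ≤ g x := fun x =>
    HigsonAux.ic_le g c M hgM (fun z => (hcpos z).le) x
  have hf_ge : ∀ x, -M ≤ f x := fun x =>
    HigsonAux.ic_ge g c M hgM (fun z => (hcpos z).le) x
  have hfM : ∀ x, |f x| ≤ M := fun x => abs_le.mpr ⟨hf_ge x, (hf_le x).trans (hgub x)⟩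
  -- main Lipschitz estimate
  have lip : ∀ (N : ℕ) (x x' : X), r N ≤ dist x₀ x → r N ≤ dist x₀ x' →
      f x - f x' ≤ (Real.exp (-((N:ℝ) + 1)) + 6 * M / w N) * dist x x' := by
    intro N x x' hs ht
    have hwN : (0:ℝ) < w N := lt_of_lt_of_le one_pos (hw1 N)
    rcases le_or_gt (dist x x') (w N) with hcase | hcase
    · have hq : c x ≤ Real.exp (-((N:ℝ) + 1)) := by
        apply Real.exp_le_exp.mpr
        have := HigsonAux.th_ge w r hw1 hwm hr N hs
        linarith
      have hratio : |c x - c x'| ≤ 2 * (dist x x' / w N) * c x' := by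
        have hu := HigsonAux.th_lip w r hw1 hwm hr N hs ht
        set v := HigsonAux.th w r (dist x₀ x') - HigsonAux.th w r (dist x₀ x) with hvdef
        have habs : |dist x₀ x' - dist x₀ x| ≤ dist x x' := by
          rw [dist_comm x₀ x', dist_comm x₀ x, abs_sub_comm]
          exact abs_dist_sub_le x x' x₀
        have hv1 : |v| ≤ dist x x' / w N :=
          le_trans hu (by apply div_le_div_of_nonneg_right habs hwN.le)
        have hv2 : |v| ≤ 1 := le_trans hv1 ((div_le_one hwN).mpr hcase)
        have hexp : |Real.exp v - 1| ≤ 2 * |v| := Real.abs_exp_sub_one_le hv2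
        have hcc : c x = c x' * Real.exp v := by
          rw [hcdef]
          simp only
          rw [← Real.exp_add]
          congr 1
          rw [hvdef]
          ring
        calc |c x - c x'| = |c x' * (Real.exp v - 1)| := by rw [hcc]; ring_nf
          _ = c x' * |Real.exp v - 1| := by
              rw [abs_mul, abs_of_pos (hcpos x')]
          _ ≤ c x' * (2 * |v|) := by
              apply mul_le_mul_of_nonneg_left hexp (hcpos x').le
          _ ≤ c x' * (2 * (dist x x' / w N)) := by
              apply mul_le_mul_of_nonneg_left _ (hcpos x').le
              linarith
          _ = 2 * (dist x x' / w N) * c x' := by ring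
      exact HigsonAux.ic_sub_le g c M hM1 hgM hcpos hwN hq hratio
    · have h1 : f x - f x' ≤ 2 * M := by
        have := hf_le x
        have := hf_ge x'
        have := hgub x
        linarith
      have hd0 : (0:ℝ) ≤ dist x x' := dist_nonneg
      have h2 : 2 * M ≤ (6 * M / w N) * dist x x' := by
        rw [div_mul_eq_mul_div, le_div_iff₀ hwN]
        nlinarith
      have h3 : (0:ℝ) ≤ Real.exp (-((N:ℝ) + 1)) * dist x x' := by positivity
      nlinarith [h1, h2, h3]
  -- continuity of f
  have hfc : Continuous f := by
    rw [Metric.continuous_iff]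
    intro x ε hε
    have hw0 : (0:ℝ) < w 0 := lt_of_lt_of_le one_pos (hw1 0)
    set C : ℝ := Real.exp (-((0:ℕ):ℝ) - 1) + 6 * M / w 0 with hCdef
    have hC0 : 0 < C := by
      have h1 : (0:ℝ) < Real.exp (-((0:ℕ):ℝ) - 1) := Real.exp_pos _
      have h2 : (0:ℝ) < 6 * M / w 0 := div_pos (by linarith) hw0
      rw [hCdef]; linarith
    refine ⟨ε / (C + 1), div_pos hε (by linarith), ?_⟩
    intro y hyx
    have h1 : r 0 ≤ dist x₀ y := by rw [hr0]; exact dist_nonneg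
    have h2 : r 0 ≤ dist x₀ x := by rw [hr0]; exact dist_nonneg
    have hcoef : Real.exp (-((0:ℕ):ℝ) + -1) = Real.exp (-((0:ℕ):ℝ) - 1) := by ring_nf
    have l1 := lip 0 y x h1 h2
    have l2 := lip 0 x y h2 h1
    have hdc : dist x y = dist y x := dist_comm x y
    have hCe : Real.exp (-(((0:ℕ):ℝ)) - 1) = Real.exp (-(((0:ℕ):ℝ) + 1)) := by ring_nf
    have key : C * dist y x < ε := by
      have k1 : C * dist y x ≤ C * (ε / (C + 1)) :=
        mul_le_mul_of_nonneg_left hyx.le hC0.le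
      have hq : (0:ℝ) < ε / (C + 1) := div_pos hε (by linarith)
      have k2 : C * (ε / (C + 1)) < (C + 1) * (ε / (C + 1)) :=
        mul_lt_mul_of_pos_right (lt_add_one C) hq
      have hne : C + 1 ≠ 0 := by linarith
      have k3 : (C + 1) * (ε / (C + 1)) = ε := by
        field_simp
      exact lt_of_le_of_lt k1 (k2.trans_eq k3)
    rw [Real.dist_eq, abs_sub_lt_iff]
    constructor
    · have : f y - f x ≤ C * dist y x := by
        rw [hCdef, hCe]
        exact l1
      linarith
    · have l3 : f x - f y ≤ C * dist y x := by
        rw [hCdef, hCe]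
        calc f x - f y ≤ (Real.exp (-(((0:ℕ):ℝ) + 1)) + 6 * M / w 0) * dist x y := l2
          _ = (Real.exp (-(((0:ℕ):ℝ) + 1)) + 6 * M / w 0) * dist y x := by rw [dist_comm]
      linarith
  -- Lipschitz-Higson property
  have hlh : IsLipHigson f := by
    intro L hL
    obtain ⟨N, hN⟩ := exists_nat_gt ((6 * M + 1) / L)
    refine ⟨Metric.closedBall x₀ (r N), isCompact_closedBall _ _, ?_⟩
    intro x y hx hy
    have hx' : r N ≤ dist x₀ x := by
      rw [Metric.mem_closedBall, not_le] at hx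
      rw [dist_comm] at hx
      exact hx.le
    have hy' : r N ≤ dist x₀ y := by
      rw [Metric.mem_closedBall, not_le] at hy
      rw [dist_comm] at hy
      exact hy.le
    have hN1 : (0:ℝ) < (N:ℝ) + 1 := by positivity
    have hcoef : Real.exp (-((N:ℝ) + 1)) + 6 * M / w N ≤ L := by
      have e1 : Real.exp (-((N:ℝ) + 1)) ≤ 1 / ((N:ℝ) + 1) := by
        rw [Real.exp_neg, inv_eq_one_div]
        apply one_div_le_one_div_of_le hN1
        linarith [Real.add_one_le_exp ((N:ℝ) + 1)]
      have e2 : 6 * M / w N ≤ 6 * M / ((N:ℝ) + 1) := by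
        have := hwge' N
        gcongr
      have e3 : 1 / ((N:ℝ) + 1) + 6 * M / ((N:ℝ) + 1) = (6 * M + 1) / ((N:ℝ) + 1) := by
        rw [← add_div]; ring_nf
      have e4 : (6 * M + 1) / ((N:ℝ) + 1) ≤ L := by
        rw [div_le_iff₀ hN1]
        have hN' : (6 * M + 1) / L < (N:ℝ) + 1 := lt_of_lt_of_le hN (by linarith)
        have h5 := (div_lt_iff₀ hL).mp hN'
        nlinarith
      linarith
    have l1 := lip N x y hx' hy'
    have l2 := lip N y x hy' hx'
    have hd0 : (0:ℝ) ≤ dist x y := dist_nonneg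
    rw [abs_sub_le_iff]
    constructor
    · calc f x - f y ≤ (Real.exp (-((N:ℝ) + 1)) + 6 * M / w N) * dist x y := l1
        _ ≤ L * dist x y := mul_le_mul_of_nonneg_right hcoef hd0
    · calc f y - f x ≤ (Real.exp (-((N:ℝ) + 1)) + 6 * M / w N) * dist y x := l2
        _ = (Real.exp (-((N:ℝ) + 1)) + 6 * M / w N) * dist x y := by rw [dist_comm]
        _ ≤ L * dist x y := mul_le_mul_of_nonneg_right hcoef hd0
  -- the C0 part
  have hC0 : Filter.Tendsto (fun x => g x - f x) (Filter.cocompact X) (nhds 0) := by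
    rw [Metric.tendsto_nhds]
    intro ε hε
    obtain ⟨m, hm⟩ := exists_nat_one_div_lt (half_pos hε)
    rw [Filter.eventually_iff, Filter.mem_cocompact]
    refine ⟨Metric.closedBall x₀ (r (m+1)), isCompact_closedBall _ _, ?_⟩
    intro x hx
    have hxd : r (m+1) < dist x₀ x := by
      simp only [Set.mem_compl_iff, Metric.mem_closedBall, not_le] at hx
      rw [dist_comm] at hx
      exact hx
    obtain ⟨n, hnm, hrn, hrn1⟩ := ann (m+1) (dist x₀ x) hxd.le
    obtain ⟨n', rfl⟩ : ∃ n', n = n' + 1 := ⟨n - 1, by omega⟩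
    have hdiag : ρ (n'+1) + K (n'+1) + 1 ≤ r (n'+1) := hrdiag n'
    have hfx : g x - ε/2 ≤ f x := by
      rw [hfdef]
      apply le_ciInf
      intro y
      show g x - ε/2 ≤ g y + c x * dist x y
      by_cases hdy : dist x y < K (n'+1)
      · -- Higson oscillation control
        have hxA : x ∉ A (n'+1) := by
          intro hmem
          have h1 := hρsub (n'+1) hmem
          rw [Metric.mem_closedBall] at h1
          rw [dist_comm] at h1
          have hK0 := hKpos (n'+1)
          linarith
        have hyA : y ∉ A (n'+1) := by
          intro hmem
          have h1 := hρsub (n'+1) hmem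
          rw [Metric.mem_closedBall] at h1
          have h2 : dist x₀ x ≤ dist x₀ y + dist y x := dist_triangle x₀ y x
          rw [dist_comm x₀ y, dist_comm y x] at h2
          linarith
        have hosc := hAosc (n'+1) x y hxA hyA hdy
        have hmn : (m:ℝ) + 1 ≤ ((n'+1:ℕ):ℝ) + 1 := by
          have : m + 1 ≤ n' + 1 := hnm
          exact_mod_cast by omega
        have h5 : (1:ℝ)/(((n'+1:ℕ):ℝ)+1) ≤ 1/((m:ℝ)+1) := by
          apply one_div_le_one_div_of_le (by positivity) hmn
        have h6 : g x - g y < ε/2 := by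
          have := le_abs_self (g x - g y)
          linarith [lt_of_lt_of_le hosc h5]
        have h7 : 0 ≤ c x * dist x y := mul_nonneg (hcpos x).le dist_nonneg
        linarith
      · push_neg at hdy
        have hθle : HigsonAux.th w r (dist x₀ x) ≤ ((n'+1:ℕ):ℝ) + 2 :=
          HigsonAux.th_le w r hw1 hr (n'+1) hrn1
        have hcx : Real.exp (-(((n'+1:ℕ):ℝ) + 2)) ≤ c x := by
          rw [hcdef]
          simp only
          apply Real.exp_le_exp.mpr
          linarith
        have h9 : Real.exp (-(((n'+1:ℕ):ℝ) + 2)) * K (n'+1) ≤ c x * dist x y :=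
          mul_le_mul hcx hdy (hKpos _).le (hcpos x).le
        have h10 : Real.exp (-(((n'+1:ℕ):ℝ) + 2)) * K (n'+1) = 2 * M := by
          rw [hKdef]
          simp only
          rw [mul_comm (2*M) _, ← mul_assoc, ← Real.exp_add]
          ring_nf
          simp [Real.exp_zero]
        have h11 := hglb y
        have h12 := hgub x
        have h13 : 0 < ε := hε
        linarith
    have hgf0 : 0 ≤ g x - f x := by linarith [hf_le x]
    simp only [Set.mem_setOf_eq, Real.dist_eq, sub_zero]
    rw [abs_of_nonneg hgf0]
    linarith
  refine ⟨f, fun x => g x - f x, hfc, ⟨M, hfM⟩, hlh, hgc.sub hfc, hC0, ?_⟩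
  funext x
  show g x = f x + (g x - f x)
  ring
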